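/- There exists an integer s₀ such that for all integers s ≥ s₀ and all integers t with 2s ≤ t ≤ 2.08s the following hold. (i) If t = 2r+1 is odd, let R' be the weighted graph on r+1 vertices containing two disjoint edges of weight 1/2 with all other edge weights equal to 1, where the four vertices incident to the weight-1/2 edges each have weight 3/(4r) and the remaining r−3 vertices each have weight 1/r; then R' is 𝒦_t-free and d_{K_s}(R') > d_{K_s}(K_r^w). (ii) If t = 2r is even, let R₂ be the weighted graph on r+1 vertices containing three disjoint edges of weight 1/2 with all other edge weights equal to 1, where the six vertices incident to the weight-1/2 edges each have weight 5/(6r) and the remaining r−5 vertices each have weight 1/r; then R₂ is 𝒦_t-free and d_{K_s}(R₂) > d_{K_s}(R₁) for every weighted graph R₁ on r vertices whose edge weights are all 1 except for exactly one edge of weight 1/2. -/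

import Mathlib

open Filter

structure WeightedGraph (V : Type) [Fintype V] where
  vw : V → ℝ
  ew : V → V → ℝ
  vw_nonneg : ∀ v, 0 ≤ vw v
  vw_le_one : ∀ v, vw v ≤ 1
  vw_sum : ∑ v, vw v = 1
  ew_nonneg : ∀ u v, 0 ≤ ew u v
  ew_le_one : ∀ u v, ew u v ≤ 1
  ew_symm : ∀ u v, ew u v = ew v u
  ew_self : ∀ v, ew v v = 0

namespace WeightedGraph

variable {V : Type} [Fintype V]

/-- The `K_m`-density of a weighted graph. -/
noncomputable def density (R : WeightedGraph V) (m : ℕ) : ℝ :=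
  ∑ σ : Fin m → V, (∏ i, R.vw (σ i)) *
    ∏ p ∈ Finset.univ.filter (fun p : Fin m × Fin m => p.1 < p.2), R.ew (σ p.1) (σ p.2)

/-- The simple graph `R_{>α}` of edges of weight greater than `α`. -/
def gtGraph (R : WeightedGraph V) (α : ℝ) : SimpleGraph V where
  Adj u v := u ≠ v ∧ α < R.ew u v
  symm := by
    constructor
    intro u v h
    refine ⟨h.1.symm, ?_⟩
    rw [R.ew_symm v u]
    exact h.2
  loopless := by constructor; intro v h; exact h.1 rfl

/-- `R` is `𝒦_t`-free. -/
def KtFree (R : WeightedGraph V) (t : ℕ) : Prop :=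
  ¬ ∃ S₁ S₂ : Finset V, S₂ ⊆ S₁ ∧ 1 ≤ S₂.card ∧ S₁.card + S₂.card = t ∧
      (R.gtGraph 0).IsClique (S₁ : Set V) ∧ (R.gtGraph (1/2)).IsClique (S₂ : Set V)

/-- The conditions (A1)–(A5) on a partition function `part`, for a `(b,a)`-partition
with the number of parts `a` implicit in the type of `part`. -/
def IsBAPartition (R : WeightedGraph V) (s : ℕ) {a : ℕ} (part : V → Fin a) : Prop :=
  Function.Surjective part ∧
  (∀ u v : V, u ≠ v → R.ew u v = 1/2 ∨ R.ew u v = 1) ∧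
  (∀ u v : V, u ≠ v → (R.ew u v = 1/2 ↔ part u = part v)) ∧
  (∀ u v : V, part u = part v → R.vw u = R.vw v) ∧
  (∀ i j : Fin a, (Finset.univ.filter fun x => part x = i).card ≤
      (Finset.univ.filter fun x => part x = j).card + 1) ∧
  (∀ u v : V, (Finset.univ.filter fun x => part x = part v).card ≤
      (Finset.univ.filter fun x => part x = part u).card → R.vw u ≤ R.vw v) ∧
  ((a = 1 ∧ ∀ i : Fin a, (Finset.univ.filter fun x => part x = i).card = s) ∨
   (2 ≤ a ∧ ∀ i : Fin a, (Finset.univ.filter fun x => part x = i).card ≤ s - 1))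

/-- `R` admits a `(b,a)`-partition (with clique parameter `s`). -/
def AdmitsPartition (R : WeightedGraph V) (s b a : ℕ) : Prop :=
  Fintype.card V = b ∧ 1 ≤ a ∧ ∃ part : V → Fin a, R.IsBAPartition s part

end WeightedGraph

/-- `π_s(𝒦_t)`: the supremum of the `K_s`-density over all `𝒦_t`-free weighted graphs. -/
noncomputable def piSup (s t : ℕ) : ℝ :=
  sSup {x : ℝ | ∃ (V : Type) (_ : Fintype V) (R : WeightedGraph V),
    R.KtFree t ∧ R.density s = x}

/-- The independence number of a simple graph. -/
noncomputable def indepNum {α : Type*} (G : SimpleGraph α) : ℕ :=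
  sSup {k : ℕ | ∃ S : Finset α, (Gᶜ).IsNClique k S}

/-- The number `N(K_s, G)` of `s`-cliques of `G`. -/
noncomputable def cliqueCount {α : Type*} (G : SimpleGraph α) (s : ℕ) : ℕ :=
  Set.ncard {S : Finset α | G.IsNClique s S}

/-- The Ramsey–Turán number `RT(n, K_s, K_t, ℓ)`. -/
noncomputable def RT (n s t : ℕ) (ℓ : ℝ) : ℕ :=
  sSup {N : ℕ | ∃ G : SimpleGraph (Fin n),
    G.CliqueFree t ∧ ((indepNum G : ℝ) < ℓ) ∧ N = cliqueCount G s}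
/-- The complete balanced weighted graph `K_r^w`: `r` vertices of weight `1/r` each,
and every edge of weight `1`. -/
noncomputable def completeBalanced (r : ℕ) (hr : 0 < r) : WeightedGraph (Fin r) where
  vw := fun _ => 1 / (r : ℝ)
  ew u v := if u = v then 0 else 1
  vw_nonneg v := by positivity
  vw_le_one v := by
    apply div_le_one_of_le₀
    · exact_mod_cast hr
    · positivity
  vw_sum := by
    have : (r : ℝ) ≠ 0 := by exact_mod_cast hr.ne'
    simp [Finset.sum_const, Finset.card_univ, this]
  ew_nonneg u v := by (try dsimp only); split <;> norm_num
  ew_le_one u v := by (try dsimp only); split <;> norm_num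
  ew_symm u v := by
    try dsimp only
    rcases eq_or_ne u v with h | h
    · simp [h]
    · rw [if_neg h, if_neg (Ne.symm h)]
  ew_self v := by simp
/-- `R` contains `k` pairwise-disjoint edges of weight `1/2` (with endpoints `e₁ i, e₂ i`),
all other edges have weight `1`, the `2k` matched vertices have weight `wA` each, and
every other vertex has weight `1/r`. -/
def MatchedHalfEdges {V : Type} [Fintype V] (R : WeightedGraph V)
    (k : ℕ) (wA : ℝ) (r : ℕ) : Prop :=
  ∃ e₁ e₂ : Fin k → V,
    Function.Injective (Sum.elim e₁ e₂) ∧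
    (∀ i : Fin k, R.ew (e₁ i) (e₂ i) = 1/2) ∧
    (∀ u v : V, u ≠ v →
      (∀ i : Fin k, ¬(u = e₁ i ∧ v = e₂ i) ∧ ¬(u = e₂ i ∧ v = e₁ i)) → R.ew u v = 1) ∧
    (∀ i : Fin k, R.vw (e₁ i) = wA ∧ R.vw (e₂ i) = wA) ∧
    (∀ v : V, (∀ i : Fin k, v ≠ e₁ i ∧ v ≠ e₂ i) → R.vw v = 1 / (r : ℝ))

/-- All edge weights of `R` equal `1` except for exactly one edge of weight `1/2`. -/
def OneHalfEdge {V : Type} [Fintype V] (R : WeightedGraph V) : Prop :=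
  ∃ u v : V, u ≠ v ∧ R.ew u v = 1/2 ∧
    ∀ x y : V, x ≠ y → ¬(x = u ∧ y = v) → ¬(x = v ∧ y = u) → R.ew x y = 1


open Finset

namespace CFL
variable {V : Type} [Fintype V] [DecidableEq V]

lemma density_eq_sum_inj (R : WeightedGraph V) (s : ℕ) :
    R.density s = ∑ σ ∈ univ.filter (fun σ : Fin s → V => Function.Injective σ),
      (∏ i, R.vw (σ i)) *
        ∏ p ∈ univ.filter (fun p : Fin s × Fin s => p.1 < p.2), R.ew (σ p.1) (σ p.2) := by
  rw [WeightedGraph.density]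
  rw [← Finset.sum_filter_add_sum_filter_not univ (fun σ : Fin s → V => Function.Injective σ)]
  have h0 : ∀ σ ∈ univ.filter (fun σ : Fin s → V => ¬ Function.Injective σ),
      (∏ i, R.vw (σ i)) *
        ∏ p ∈ univ.filter (fun p : Fin s × Fin s => p.1 < p.2), R.ew (σ p.1) (σ p.2) = 0 := by
    intro σ hσ
    have hσ2 := (mem_filter.1 hσ).2
    simp only [Function.Injective] at hσ2
    push_neg at hσ2
    obtain ⟨i, j, hij, hne⟩ := hσ2
    rcases lt_or_gt_of_ne hne with h | h
    · have : R.ew (σ i) (σ j) = 0 := by rw [hij]; exact R.ew_self _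
      rw [Finset.prod_eq_zero (i := (i, j)) (by simp [h]) this, mul_zero]
    · have : R.ew (σ j) (σ i) = 0 := by rw [hij]; exact R.ew_self _
      rw [Finset.prod_eq_zero (i := (j, i)) (by simp [h]) this, mul_zero]
  rw [Finset.sum_eq_zero h0, add_zero]

lemma card_filter_inj (s : ℕ) :
    (univ.filter (fun σ : Fin s → V => Function.Injective σ)).card
      = (Fintype.card V).descFactorial s := by
  rw [← Fintype.card_subtype, Fintype.card_congr (Equiv.subtypeInjectiveEquivEmbedding (Fin s) V),
    Fintype.card_embedding_eq, Fintype.card_fin]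

lemma card_inj_with_image (s : ℕ) (S : Finset V) (hS : S.card = s) :
    ((univ.filter (fun σ : Fin s → V => Function.Injective σ)).filter
        (fun σ => image σ univ = S)).card = s.factorial := by
  rw [Finset.filter_filter, ← Fintype.card_subtype]
  have e : {σ : Fin s → V // Function.Injective σ ∧ image σ univ = S} ≃ (Fin s ↪ {x // x ∈ S}) := by
    refine ⟨fun σ => ⟨fun i => ⟨σ.1 i, ?_⟩, fun a b hab => σ.2.1 (congrArg Subtype.val hab)⟩,
      fun τ => ⟨fun i => (τ i : V), ?_, ?_⟩, fun σ => ?_, fun τ => ?_⟩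
    · have h := mem_image_of_mem σ.1 (mem_univ i); rwa [σ.2.2] at h
    · exact fun a b hab => τ.injective (Subtype.ext hab)
    · have hsub : image (fun i => (τ i : V)) univ ⊆ S := by
        intro x hx
        simp only [mem_image] at hx
        obtain ⟨i, _, rfl⟩ := hx
        exact (τ i).2
      refine (Finset.eq_of_subset_of_card_le hsub ?_)
      rw [hS, Finset.card_image_of_injective _ (fun a b hab => τ.injective (Subtype.ext hab))]
      simp
    · ext i; rfl
    · ext i; rfl
  rw [Fintype.card_congr e, Fintype.card_embedding_eq, Fintype.card_fin, Fintype.card_coe, hS,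
    Nat.descFactorial_self]

lemma card_powersetCard_inter (s : ℕ) (A T : Finset V) (hT : T ⊆ A) (hTs : T.card ≤ s) :
    ((univ.powersetCard s).filter (fun S => S ∩ A = T)).card
      = (Fintype.card V - A.card).choose (s - T.card) := by
  have key : ((univ.powersetCard s).filter (fun S => S ∩ A = T)).card
      = ((univ \ A).powersetCard (s - T.card)).card := by
    apply Finset.card_bij' (fun S _ => S \ A) (fun U _ => U ∪ T)
    · intro S hS
      simp only [mem_filter, Finset.mem_powersetCard] at hS
      rw [Finset.mem_powersetCard]
      constructor
      · exact Finset.sdiff_subset_sdiff hS.1.1 (le_refl _)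
      · have := Finset.card_sdiff_add_card_inter S A
        rw [hS.2] at this
        omega
    · intro U hU
      rw [Finset.mem_powersetCard] at hU
      have hUA : U ∩ A = ∅ := by
        rw [← Finset.disjoint_iff_inter_eq_empty]
        exact Finset.disjoint_left.2 fun x hxU hxA =>
          ((Finset.mem_sdiff.1 (hU.1 hxU)).2 hxA)
      have hdisj : Disjoint U T := by
        rw [Finset.disjoint_left]
        intro x hxU hxT
        exact (Finset.mem_sdiff.1 (hU.1 hxU)).2 (hT hxT)
      simp only [mem_filter, Finset.mem_powersetCard]
      refine ⟨⟨Finset.subset_univ _, ?_⟩, ?_⟩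
      · rw [Finset.card_union_of_disjoint hdisj, hU.2]; omega
      · rw [Finset.union_inter_distrib_right, hUA, Finset.empty_union,
          Finset.inter_eq_left.2 hT]
    · intro S hS
      simp only [mem_filter] at hS
      rw [← hS.2]
      exact Finset.sdiff_union_inter S A
    · intro U hU
      rw [Finset.mem_powersetCard] at hU
      have hUA : U \ A = U := by
        rw [Finset.sdiff_eq_self_iff_disjoint]
        exact Finset.disjoint_left.2 fun x hxU hxA =>
          ((Finset.mem_sdiff.1 (hU.1 hxU)).2 hxA)
      rw [Finset.union_sdiff_distrib, hUA, Finset.sdiff_eq_empty_iff_subset.2 hT,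
        Finset.union_empty]
  rw [key, Finset.card_powersetCard, Finset.card_sdiff_of_subset (Finset.subset_univ A), Finset.card_univ]

end CFL
namespace CFL
variable {V : Type} [Fintype V] [DecidableEq V]

def mB {k : ℕ} (B : Finset (Fin k × Fin 2)) : ℕ :=
  (univ.filter (fun ℓ : Fin k => (ℓ, 0) ∈ B ∧ (ℓ, 1) ∈ B)).card

lemma prod_ite_one_card {α : Type*} [DecidableEq α] (s : Finset α) (p : α → Prop)
    [DecidablePred p] (a : ℝ) :
    ∏ x ∈ s, (if p x then a else 1) = a ^ (s.filter p).card := by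
  rw [← Finset.prod_filter_mul_prod_filter_not s p]
  rw [Finset.prod_congr rfl (fun x hx => if_pos (mem_filter.1 hx).2),
    Finset.prod_congr rfl (fun x hx => if_neg (mem_filter.1 hx).2),
    Finset.prod_const, Finset.prod_const, one_pow, mul_one]

lemma density_formula (R : WeightedGraph V) (k r s : ℕ) (wA : ℝ)
    (e₁ e₂ : Fin k → V)
    (hinj : Function.Injective (Sum.elim e₁ e₂))
    (hhalf : ∀ i : Fin k, R.ew (e₁ i) (e₂ i) = 1/2)
    (hone : ∀ u v : V, u ≠ v →
      (∀ i : Fin k, ¬(u = e₁ i ∧ v = e₂ i) ∧ ¬(u = e₂ i ∧ v = e₁ i)) → R.ew u v = 1)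
    (hwA : ∀ i : Fin k, R.vw (e₁ i) = wA ∧ R.vw (e₂ i) = wA)
    (hwr : ∀ v : V, (∀ i : Fin k, v ≠ e₁ i ∧ v ≠ e₂ i) → R.vw v = 1 / (r : ℝ))
    (hks : 2 * k ≤ s) :
    R.density s = ∑ B ∈ (univ : Finset (Fin k × Fin 2)).powerset,
      (s.factorial : ℝ) * ((Fintype.card V - 2*k).choose (s - B.card) : ℝ) *
        (wA ^ B.card * (1/(r:ℝ)) ^ (s - B.card) * (1/2 : ℝ) ^ (mB B)) := by
  classical
  set E : Fin k × Fin 2 → V := fun q => if q.2 = 0 then e₁ q.1 else e₂ q.1 with hE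
  have hE0 : ∀ ℓ : Fin k, E (ℓ, 0) = e₁ ℓ := fun ℓ => by simp [hE]
  have hE1 : ∀ ℓ : Fin k, E (ℓ, 1) = e₂ ℓ := fun ℓ => by
    simp only [hE]; norm_num
  have he11 : ∀ a b : Fin k, e₁ a = e₁ b → a = b := fun a b h =>
    Sum.inl.inj (hinj (show Sum.elim e₁ e₂ (.inl a) = Sum.elim e₁ e₂ (.inl b) from h))
  have he22 : ∀ a b : Fin k, e₂ a = e₂ b → a = b := fun a b h =>
    Sum.inr.inj (hinj (show Sum.elim e₁ e₂ (.inr a) = Sum.elim e₁ e₂ (.inr b) from h))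
  have he12 : ∀ a b : Fin k, e₁ a ≠ e₂ b := fun a b h =>
    Sum.inl_ne_inr (hinj (show Sum.elim e₁ e₂ (.inl a) = Sum.elim e₁ e₂ (.inr b) from h))
  have hEinj : Function.Injective E := by
    have h2 : ∀ x : Fin 2, x = 0 ∨ x = 1 := by decide
    rintro ⟨a, x⟩ ⟨b, y⟩ h
    rcases h2 x with rfl | rfl <;> rcases h2 y with rfl | rfl <;>
      simp only [hE0, hE1] at h
    · rw [he11 _ _ h]
    · exact absurd h (he12 _ _)
    · exact absurd h.symm (he12 _ _)
    · rw [he22 _ _ h]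
  set A : Finset V := image E univ with hA
  have hAcard : A.card = 2 * k := by
    rw [hA, card_image_of_injective _ hEinj, card_univ, Fintype.card_prod,
      Fintype.card_fin, Fintype.card_fin, mul_comm]
  set g : Finset V → ℝ := fun S => wA ^ (S ∩ A).card * (1/(r:ℝ)) ^ (s - (S ∩ A).card) *
      (1/2 : ℝ) ^ ((univ.filter (fun ℓ : Fin k => e₁ ℓ ∈ S ∧ e₂ ℓ ∈ S)).card) with hg
  -- step: per-sigma term
  have keyterm : ∀ σ ∈ univ.filter (fun σ : Fin s → V => Function.Injective σ),
      (∏ i, R.vw (σ i)) *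
        ∏ p ∈ univ.filter (fun p : Fin s × Fin s => p.1 < p.2), R.ew (σ p.1) (σ p.2)
        = g (image σ univ) := by
    intro σ hσ
    have hσinj : Function.Injective σ := (mem_filter.1 hσ).2
    set S : Finset V := image σ univ with hS
    -- vertex part
    have hv : (∏ i, R.vw (σ i)) = wA ^ (S ∩ A).card * (1/(r:ℝ)) ^ (s - (S ∩ A).card) := by
      have himg : image σ (univ.filter (fun i => σ i ∈ A)) = S ∩ A := by
        ext x
        simp only [Finset.mem_image, mem_filter, mem_univ, true_and, Finset.mem_inter, hS]
        constructor
        · rintro ⟨i, hiA, rfl⟩; exact ⟨⟨i, rfl⟩, hiA⟩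
        · rintro ⟨⟨i, rfl⟩, hxA⟩; exact ⟨i, hxA, rfl⟩
      have hc1 : (univ.filter (fun i => σ i ∈ A)).card = (S ∩ A).card := by
        rw [← himg, card_image_of_injective _ hσinj]
      have hc2 : (univ.filter (fun i => ¬ σ i ∈ A)).card = s - (S ∩ A).card := by
        have := Finset.card_filter_add_card_filter_not
          (s := (univ : Finset (Fin s))) (p := fun i => σ i ∈ A)
        rw [card_univ, Fintype.card_fin, hc1] at this
        omega
      rw [← Finset.prod_filter_mul_prod_filter_not univ (fun i => σ i ∈ A)]
      have hwa : ∀ i ∈ univ.filter (fun i => σ i ∈ A), R.vw (σ i) = wA := by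
        intro i hi
        have : σ i ∈ A := (mem_filter.1 hi).2
        rw [hA] at this
        obtain ⟨q, _, hq⟩ := Finset.mem_image.1 this
        have h2 : ∀ x : Fin 2, x = 0 ∨ x = 1 := by decide
        rcases h2 q.2 with h | h
        · have : E q = e₁ q.1 := by rw [← hE0 q.1]; congr 1; exact Prod.ext rfl h
          rw [← hq, this]; exact (hwA q.1).1
        · have : E q = e₂ q.1 := by rw [← hE1 q.1]; congr 1; exact Prod.ext rfl h
          rw [← hq, this]; exact (hwA q.1).2
      have hwb : ∀ i ∈ univ.filter (fun i => ¬ σ i ∈ A), R.vw (σ i) = 1/(r:ℝ) := by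
        intro i hi
        have hni : ¬ σ i ∈ A := (mem_filter.1 hi).2
        apply hwr
        intro ℓ
        constructor
        · intro h; exact hni (by rw [h, hA, ← hE0 ℓ]; exact Finset.mem_image_of_mem E (mem_univ _))
        · intro h; exact hni (by rw [h, hA, ← hE1 ℓ]; exact Finset.mem_image_of_mem E (mem_univ _))
      rw [Finset.prod_congr rfl hwa, Finset.prod_congr rfl hwb, Finset.prod_const,
        Finset.prod_const, hc1, hc2]
    -- edge part
    have he : (∏ p ∈ univ.filter (fun p : Fin s × Fin s => p.1 < p.2), R.ew (σ p.1) (σ p.2))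
        = (1/2 : ℝ) ^ ((univ.filter (fun ℓ : Fin k => e₁ ℓ ∈ S ∧ e₂ ℓ ∈ S)).card) := by
      set P : Finset (Fin s × Fin s) := univ.filter (fun p : Fin s × Fin s => p.1 < p.2) with hP
      have step1 : ∀ p ∈ P, R.ew (σ p.1) (σ p.2) =
          ∏ ℓ : Fin k, (if (σ p.1 = e₁ ℓ ∧ σ p.2 = e₂ ℓ) ∨ (σ p.1 = e₂ ℓ ∧ σ p.2 = e₁ ℓ)
            then (1/2:ℝ) else 1) := by
        intro p hp
        have hlt : p.1 < p.2 := (mem_filter.1 hp).2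
        have hne : σ p.1 ≠ σ p.2 := fun h => absurd (hσinj h) (ne_of_lt hlt)
        by_cases hex : ∃ ℓ : Fin k, (σ p.1 = e₁ ℓ ∧ σ p.2 = e₂ ℓ) ∨ (σ p.1 = e₂ ℓ ∧ σ p.2 = e₁ ℓ)
        · obtain ⟨ℓ₀, hℓ₀⟩ := hex
          have huniq : ∀ ℓ ∈ (univ : Finset (Fin k)), ℓ ≠ ℓ₀ →
              (if (σ p.1 = e₁ ℓ ∧ σ p.2 = e₂ ℓ) ∨ (σ p.1 = e₂ ℓ ∧ σ p.2 = e₁ ℓ)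
                then (1/2:ℝ) else 1) = 1 := by
            intro ℓ _ hℓ
            rw [if_neg]
            intro hcon
            apply hℓ
            rcases hℓ₀ with ⟨h1, h2⟩ | ⟨h1, h2⟩ <;> rcases hcon with ⟨h3, h4⟩ | ⟨h3, h4⟩
            · exact he11 _ _ (h3.symm.trans h1)
            · exact absurd (h1.symm.trans h3) (he12 _ _)
            · exact absurd (h3.symm.trans h1) (he12 _ _)
            · exact he22 _ _ (h3.symm.trans h1)
          rw [Finset.prod_eq_single ℓ₀ huniq (by simp), if_pos hℓ₀]
          rcases hℓ₀ with ⟨h1, h2⟩ | ⟨h1, h2⟩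
          · rw [h1, h2]; exact hhalf ℓ₀
          · rw [h1, h2, R.ew_symm]; exact hhalf ℓ₀
        · rw [Finset.prod_eq_one (fun ℓ _ => if_neg (fun h => hex ⟨ℓ, h⟩))]
          exact hone _ _ hne (fun i => ⟨fun h => hex ⟨i, Or.inl h⟩, fun h => hex ⟨i, Or.inr h⟩⟩)
      rw [Finset.prod_congr rfl step1, Finset.prod_comm]
      have step3 : ∀ ℓ ∈ (univ : Finset (Fin k)),
          (∏ p ∈ P, (if (σ p.1 = e₁ ℓ ∧ σ p.2 = e₂ ℓ) ∨ (σ p.1 = e₂ ℓ ∧ σ p.2 = e₁ ℓ)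
            then (1/2:ℝ) else 1))
            = (1/2:ℝ) ^ (if e₁ ℓ ∈ S ∧ e₂ ℓ ∈ S then 1 else 0) := by
        intro ℓ _
        rw [prod_ite_one_card]
        congr 1
        split_ifs with hmem
        · obtain ⟨i, hi⟩ : ∃ i, σ i = e₁ ℓ := by
            obtain ⟨i, _, hi⟩ := Finset.mem_image.1 hmem.1; exact ⟨i, hi⟩
          obtain ⟨j, hj⟩ : ∃ j, σ j = e₂ ℓ := by
            obtain ⟨j, _, hj⟩ := Finset.mem_image.1 hmem.2; exact ⟨j, hj⟩
          have hij : i ≠ j := fun h => he12 ℓ ℓ (by rw [← hi, h, hj])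
          rw [Finset.card_eq_one]
          rcases lt_or_gt_of_ne hij with h | h
          · refine ⟨(i, j), ?_⟩
            rw [Finset.eq_singleton_iff_unique_mem]
            constructor
            · rw [mem_filter]
              exact ⟨by rw [hP, mem_filter]; exact ⟨mem_univ _, h⟩, Or.inl ⟨hi, hj⟩⟩
            · rintro ⟨a, b⟩ hab
              rw [mem_filter, hP, mem_filter] at hab
              obtain ⟨⟨_, hab1⟩, hab2⟩ := hab
              rcases hab2 with ⟨h3, h4⟩ | ⟨h3, h4⟩
              · have ha : a = i := hσinj (h3.trans hi.symm)
                have hb : b = j := hσinj (h4.trans hj.symm)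
                simp [ha, hb]
              · have ha : a = j := hσinj (h3.trans hj.symm)
                have hb : b = i := hσinj (h4.trans hi.symm)
                exact absurd (ha ▸ hb ▸ hab1) (not_lt.2 h.le)
          · refine ⟨(j, i), ?_⟩
            rw [Finset.eq_singleton_iff_unique_mem]
            constructor
            · rw [mem_filter]
              exact ⟨by rw [hP, mem_filter]; exact ⟨mem_univ _, h⟩, Or.inr ⟨hj, hi⟩⟩
            · rintro ⟨a, b⟩ hab
              rw [mem_filter, hP, mem_filter] at hab
              obtain ⟨⟨_, hab1⟩, hab2⟩ := hab
              rcases hab2 with ⟨h3, h4⟩ | ⟨h3, h4⟩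
              · have ha : a = i := hσinj (h3.trans hi.symm)
                have hb : b = j := hσinj (h4.trans hj.symm)
                exact absurd (ha ▸ hb ▸ hab1) (not_lt.2 h.le)
              · have ha : a = j := hσinj (h3.trans hj.symm)
                have hb : b = i := hσinj (h4.trans hi.symm)
                simp [ha, hb]
        · rw [Finset.card_eq_zero, Finset.filter_eq_empty_iff]
          intro p _ hcon
          apply hmem
          rcases hcon with ⟨h3, h4⟩ | ⟨h3, h4⟩
          · exact ⟨h3 ▸ Finset.mem_image_of_mem σ (mem_univ p.1),
              h4 ▸ Finset.mem_image_of_mem σ (mem_univ p.2)⟩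
          · exact ⟨h4 ▸ Finset.mem_image_of_mem σ (mem_univ p.2),
              h3 ▸ Finset.mem_image_of_mem σ (mem_univ p.1)⟩
      rw [Finset.prod_congr rfl step3, Finset.prod_pow_eq_pow_sum]
      congr 1
      rw [Finset.card_filter]
    rw [hv, he, hg]
  rw [density_eq_sum_inj, Finset.sum_congr rfl keyterm]
  -- fiberwise over image
  have hmaps : ∀ σ ∈ univ.filter (fun σ : Fin s → V => Function.Injective σ),
      image σ univ ∈ univ.powersetCard s := by
    intro σ hσ
    rw [Finset.mem_powersetCard]
    exact ⟨subset_univ _, by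
      rw [card_image_of_injective _ (mem_filter.1 hσ).2, card_univ, Fintype.card_fin]⟩
  rw [← Finset.sum_fiberwise_of_maps_to hmaps (fun σ => g (image σ univ))]
  have h3 : ∀ S ∈ univ.powersetCard s,
      (∑ σ ∈ (univ.filter (fun σ : Fin s → V => Function.Injective σ)).filter
          (fun σ => image σ univ = S), g (image σ univ)) = (s.factorial : ℝ) * g S := by
    intro S hS
    rw [Finset.sum_congr rfl (fun σ hσ => by rw [(mem_filter.1 hσ).2]),
      Finset.sum_const, card_inj_with_image s S (Finset.mem_powersetCard.1 hS).2,
      nsmul_eq_mul]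
  rw [Finset.sum_congr rfl h3]
  -- fiberwise over intersection with A
  have hmaps2 : ∀ S ∈ univ.powersetCard s, S ∩ A ∈ A.powerset := by
    intro S _; exact Finset.mem_powerset.2 Finset.inter_subset_right
  rw [← Finset.sum_fiberwise_of_maps_to hmaps2 (fun S => (s.factorial : ℝ) * g S)]
  set gT : Finset V → ℝ := fun T => wA ^ T.card * (1/(r:ℝ)) ^ (s - T.card) *
      (1/2 : ℝ) ^ ((univ.filter (fun ℓ : Fin k => e₁ ℓ ∈ T ∧ e₂ ℓ ∈ T)).card) with hgT
  have h4 : ∀ T ∈ A.powerset,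
      (∑ S ∈ (univ.powersetCard s).filter (fun S => S ∩ A = T), (s.factorial : ℝ) * g S)
        = ((Fintype.card V - 2*k).choose (s - T.card) : ℝ) * ((s.factorial : ℝ) * gT T) := by
    intro T hT
    have hTA : T ⊆ A := Finset.mem_powerset.1 hT
    have hTs : T.card ≤ s := le_trans (le_trans (Finset.card_le_card hTA) (le_of_eq hAcard)) hks
    have hgS : ∀ S ∈ (univ.powersetCard s).filter (fun S => S ∩ A = T), g S = gT T := by
      intro S hS
      have hST : S ∩ A = T := (mem_filter.1 hS).2
      simp only [hg, hgT, hST]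
      congr 2
      apply congrArg
      apply Finset.filter_congr
      intro ℓ _
      have h1 : e₁ ℓ ∈ A := by rw [hA, ← hE0 ℓ]; exact Finset.mem_image_of_mem E (mem_univ _)
      have h2 : e₂ ℓ ∈ A := by rw [hA, ← hE1 ℓ]; exact Finset.mem_image_of_mem E (mem_univ _)
      rw [← hST]
      simp only [Finset.mem_inter, h1, h2, and_true]
    rw [Finset.sum_congr rfl (fun S hS => by rw [hgS S hS]), Finset.sum_const,
      card_powersetCard_inter s A T hTA hTs, hAcard, nsmul_eq_mul]
  rw [Finset.sum_congr rfl h4]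
  -- reindex powerset A by powerset (Fin k × Fin 2)
  refine (Finset.sum_bij (fun B _ => image E B) ?_ ?_ ?_ ?_).symm
  · intro B _
    exact Finset.mem_powerset.2 (by rw [hA]; exact Finset.image_subset_image (subset_univ B))
  · intro B _ B' _ h
    exact Finset.image_injective hEinj h
  · intro T hT
    refine ⟨univ.filter (fun q => E q ∈ T), Finset.mem_powerset.2 (subset_univ _), ?_⟩
    ext x
    simp only [Finset.mem_image, mem_filter, mem_univ, true_and]
    constructor
    · rintro ⟨q, hq, rfl⟩; exact hq
    · intro hx
      have := Finset.mem_powerset.1 hT hx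
      rw [hA] at this
      obtain ⟨q, _, rfl⟩ := Finset.mem_image.1 this
      exact ⟨q, hx, rfl⟩
  · intro B _
    have hcard : (image E B).card = B.card := card_image_of_injective _ hEinj
    have hm : (univ.filter (fun ℓ : Fin k => e₁ ℓ ∈ image E B ∧ e₂ ℓ ∈ image E B)).card
        = mB B := by
      rw [mB]
      congr 1
      apply Finset.filter_congr
      intro ℓ _
      rw [← hE0 ℓ, ← hE1 ℓ]
      constructor
      · rintro ⟨h1, h2⟩
        exact ⟨(hEinj.mem_finset_image).1 h1,
          (hEinj.mem_finset_image).1 h2⟩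
      · rintro ⟨h1, h2⟩
        exact ⟨Finset.mem_image_of_mem E h1, Finset.mem_image_of_mem E h2⟩
    rw [hgT]
    simp only [hcard, hm]
    ring
end CFL
namespace CFL

lemma sum_powerset_eval {k : ℕ} (f : ℕ → ℕ → ℝ) (pairs : Finset (ℕ × ℕ))
    (hmaps : ∀ B ∈ (univ : Finset (Fin k × Fin 2)).powerset, (B.card, mB B) ∈ pairs) :
    ∑ B ∈ (univ : Finset (Fin k × Fin 2)).powerset, f B.card (mB B)
      = ∑ p ∈ pairs, (((univ : Finset (Fin k × Fin 2)).powerset).filter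
          (fun B => (B.card, mB B) = p)).card • f p.1 p.2 := by
  rw [← Finset.sum_fiberwise_of_maps_to hmaps (fun B => f B.card (mB B))]
  refine Finset.sum_congr rfl fun p _ => ?_
  rw [← Finset.sum_const]
  refine Finset.sum_congr rfl fun B hB => ?_
  have h := (mem_filter.1 hB).2
  rw [show B.card = p.1 from congrArg Prod.fst h, show mB B = p.2 from congrArg Prod.snd h]

lemma eval2 (F : ℕ → ℕ → ℝ) :
    ∑ B ∈ (univ : Finset (Fin 2 × Fin 2)).powerset, F B.card (mB B)
      = F 0 0 + 4*F 1 0 + 4*F 2 0 + 2*F 2 1 + 4*F 3 1 + F 4 2 := by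
  rw [sum_powerset_eval F ({(0,0),(1,0),(2,0),(2,1),(3,1),(4,2)} : Finset (ℕ × ℕ))
    (by decide)]
  rw [Finset.sum_insert (by decide), Finset.sum_insert (by decide),
    Finset.sum_insert (by decide), Finset.sum_insert (by decide),
    Finset.sum_insert (by decide), Finset.sum_singleton]
  rw [show (((univ : Finset (Fin 2 × Fin 2)).powerset).filter
      (fun B => (B.card, mB B) = (0,0))).card = 1 from by decide,
    show (((univ : Finset (Fin 2 × Fin 2)).powerset).filter
      (fun B => (B.card, mB B) = (1,0))).card = 4 from by decide,
    show (((univ : Finset (Fin 2 × Fin 2)).powerset).filter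
      (fun B => (B.card, mB B) = (2,0))).card = 4 from by decide,
    show (((univ : Finset (Fin 2 × Fin 2)).powerset).filter
      (fun B => (B.card, mB B) = (2,1))).card = 2 from by decide,
    show (((univ : Finset (Fin 2 × Fin 2)).powerset).filter
      (fun B => (B.card, mB B) = (3,1))).card = 4 from by decide,
    show (((univ : Finset (Fin 2 × Fin 2)).powerset).filter
      (fun B => (B.card, mB B) = (4,2))).card = 1 from by decide]
  simp only [nsmul_eq_mul]
  push_cast
  ring

lemma eval3 (F : ℕ → ℕ → ℝ) :
    ∑ B ∈ (univ : Finset (Fin 3 × Fin 2)).powerset, F B.card (mB B)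
      = F 0 0 + 6*F 1 0 + 12*F 2 0 + 3*F 2 1 + 8*F 3 0 + 12*F 3 1
        + 12*F 4 1 + 3*F 4 2 + 6*F 5 2 + F 6 3 := by
  rw [sum_powerset_eval F
    ({(0,0),(1,0),(2,0),(2,1),(3,0),(3,1),(4,1),(4,2),(5,2),(6,3)} : Finset (ℕ × ℕ))
    (by decide)]
  rw [Finset.sum_insert (by decide), Finset.sum_insert (by decide),
    Finset.sum_insert (by decide), Finset.sum_insert (by decide),
    Finset.sum_insert (by decide), Finset.sum_insert (by decide),
    Finset.sum_insert (by decide), Finset.sum_insert (by decide),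
    Finset.sum_insert (by decide), Finset.sum_singleton]
  rw [show (((univ : Finset (Fin 3 × Fin 2)).powerset).filter
      (fun B => (B.card, mB B) = (0,0))).card = 1 from by decide,
    show (((univ : Finset (Fin 3 × Fin 2)).powerset).filter
      (fun B => (B.card, mB B) = (1,0))).card = 6 from by decide,
    show (((univ : Finset (Fin 3 × Fin 2)).powerset).filter
      (fun B => (B.card, mB B) = (2,0))).card = 12 from by decide,
    show (((univ : Finset (Fin 3 × Fin 2)).powerset).filter
      (fun B => (B.card, mB B) = (2,1))).card = 3 from by decide,
    show (((univ : Finset (Fin 3 × Fin 2)).powerset).filter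
      (fun B => (B.card, mB B) = (3,0))).card = 8 from by decide,
    show (((univ : Finset (Fin 3 × Fin 2)).powerset).filter
      (fun B => (B.card, mB B) = (3,1))).card = 12 from by decide,
    show (((univ : Finset (Fin 3 × Fin 2)).powerset).filter
      (fun B => (B.card, mB B) = (4,1))).card = 12 from by decide,
    show (((univ : Finset (Fin 3 × Fin 2)).powerset).filter
      (fun B => (B.card, mB B) = (4,2))).card = 3 from by decide,
    show (((univ : Finset (Fin 3 × Fin 2)).powerset).filter
      (fun B => (B.card, mB B) = (5,2))).card = 6 from by decide,
    show (((univ : Finset (Fin 3 × Fin 2)).powerset).filter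
      (fun B => (B.card, mB B) = (6,3))).card = 1 from by decide]
  simp only [nsmul_eq_mul]
  push_cast
  ring

end CFL
namespace CFL
variable {V : Type} [Fintype V] [DecidableEq V]

lemma density_matched (R : WeightedGraph V) (k r s : ℕ) (wA : ℝ)
    (h : MatchedHalfEdges R k wA r) (hks : 2*k ≤ s) :
    R.density s = ∑ B ∈ (univ : Finset (Fin k × Fin 2)).powerset,
      (s.factorial : ℝ) * ((Fintype.card V - 2*k).choose (s - B.card) : ℝ) *
        (wA ^ B.card * (1/(r:ℝ)) ^ (s - B.card) * (1/2 : ℝ) ^ (mB B)) := by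
  obtain ⟨e₁, e₂, hinj, hhalf, hone, hwA, hwr⟩ := h
  exact density_formula R k r s wA e₁ e₂ hinj hhalf hone hwA hwr hks

lemma density_R2k (r s : ℕ) (hs : 4 ≤ s) (hrs : s ≤ r) (R : WeightedGraph (Fin (r+1)))
    (h : MatchedHalfEdges R 2 (3/(4*(r:ℝ))) r) :
    R.density s = (s.factorial : ℝ) * (1/(r:ℝ))^s *
      ( ((r-3).choose s : ℝ) + 3*((r-3).choose (s-1) : ℝ) + (45/16)*((r-3).choose (s-2) : ℝ)
        + (27/32)*((r-3).choose (s-3) : ℝ) + (81/1024)*((r-3).choose (s-4) : ℝ) ) := by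
  rw [density_matched R 2 r s _ h (by omega)]
  have he := eval2 (fun j m => (s.factorial : ℝ) *
      ((Fintype.card (Fin (r+1)) - 2*2).choose (s - j) : ℝ) *
      ((3/(4*(r:ℝ))) ^ j * (1/(r:ℝ)) ^ (s - j) * (1/2 : ℝ) ^ m))
  rw [he]
  have hc : Fintype.card (Fin (r+1)) - 2*2 = r - 3 := by
    rw [Fintype.card_fin]; omega
  rw [hc]
  have key : ∀ j, j ≤ s → (3/(4*(r:ℝ)))^j * (1/(r:ℝ))^(s-j) = (3/4)^j * (1/(r:ℝ))^s := by
    intro j hj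
    rw [show (3/(4*(r:ℝ))) = (3/4) * (1/(r:ℝ)) by ring, mul_pow, mul_assoc, ← pow_add,
      show j + (s - j) = s from by omega]
  rw [key 1 (by omega), key 2 (by omega), key 3 (by omega), key 4 (by omega)]
  simp only [pow_zero, Nat.sub_zero, one_mul, mul_one]
  norm_num
  ring

lemma density_R3k (r s : ℕ) (hs : 6 ≤ s) (hrs : s ≤ r) (R : WeightedGraph (Fin (r+1)))
    (h : MatchedHalfEdges R 3 (5/(6*(r:ℝ))) r) :
    R.density s = (s.factorial : ℝ) * (1/(r:ℝ))^s *
      ( ((r-5).choose s : ℝ) + 5*((r-5).choose (s-1) : ℝ) + (75/8)*((r-5).choose (s-2) : ℝ)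
        + (875/108)*((r-5).choose (s-3) : ℝ) + (5625/1728)*((r-5).choose (s-4) : ℝ)
        + (3125/5184)*((r-5).choose (s-5) : ℝ) + (15625/373248)*((r-5).choose (s-6) : ℝ) ) := by
  rw [density_matched R 3 r s _ h (by omega)]
  have he := eval3 (fun j m => (s.factorial : ℝ) *
      ((Fintype.card (Fin (r+1)) - 2*3).choose (s - j) : ℝ) *
      ((5/(6*(r:ℝ))) ^ j * (1/(r:ℝ)) ^ (s - j) * (1/2 : ℝ) ^ m))
  rw [he]
  have hc : Fintype.card (Fin (r+1)) - 2*3 = r - 5 := by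
    rw [Fintype.card_fin]; omega
  rw [hc]
  have key : ∀ j, j ≤ s → (5/(6*(r:ℝ)))^j * (1/(r:ℝ))^(s-j) = (5/6)^j * (1/(r:ℝ))^s := by
    intro j hj
    rw [show (5/(6*(r:ℝ))) = (5/6) * (1/(r:ℝ)) by ring, mul_pow, mul_assoc, ← pow_add,
      show j + (s - j) = s from by omega]
  rw [key 1 (by omega), key 2 (by omega), key 3 (by omega), key 4 (by omega),
    key 5 (by omega), key 6 (by omega)]
  simp only [pow_zero, Nat.sub_zero, one_mul, mul_one]
  norm_num
  ring

lemma density_completeBalanced (r s : ℕ) (hr : 0 < r) :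
    (completeBalanced r hr).density s = ((r.descFactorial s : ℕ) : ℝ) * (1/(r:ℝ))^s := by
  rw [density_eq_sum_inj]
  have hterm : ∀ σ ∈ univ.filter (fun σ : Fin s → Fin r => Function.Injective σ),
      (∏ i, (completeBalanced r hr).vw (σ i)) *
        ∏ p ∈ univ.filter (fun p : Fin s × Fin s => p.1 < p.2),
          (completeBalanced r hr).ew (σ p.1) (σ p.2) = (1/(r:ℝ))^s := by
    intro σ hσ
    have hσinj : Function.Injective σ := (mem_filter.1 hσ).2
    have h1 : (∏ i, (completeBalanced r hr).vw (σ i)) = (1/(r:ℝ))^s := by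
      simp [completeBalanced, Finset.prod_const, Finset.card_univ]
    have h2 : (∏ p ∈ univ.filter (fun p : Fin s × Fin s => p.1 < p.2),
        (completeBalanced r hr).ew (σ p.1) (σ p.2)) = 1 := by
      apply Finset.prod_eq_one
      intro p hp
      have hne : σ p.1 ≠ σ p.2 := fun hc => absurd (hσinj hc) (ne_of_lt (mem_filter.1 hp).2)
      simp [completeBalanced, hne]
    rw [h1, h2, mul_one]
  rw [Finset.sum_congr rfl hterm, Finset.sum_const, card_filter_inj, Fintype.card_fin,
    nsmul_eq_mul]

lemma choose_expand (a r s : ℕ) (has : a ≤ s) (har : a ≤ r) :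
    (r.choose s : ℝ) = ∑ j ∈ Finset.range (a+1), (a.choose j : ℝ) * ((r-a).choose (s-j) : ℝ) := by
  have h := Nat.add_choose_eq a (r-a) s
  rw [Nat.add_sub_cancel' har, Finset.Nat.sum_antidiagonal_eq_sum_range_succ_mk] at h
  have h2 : ∑ j ∈ Finset.range (s+1), a.choose j * (r-a).choose (s-j)
      = ∑ j ∈ Finset.range (a+1), a.choose j * (r-a).choose (s-j) := by
    refine (Finset.sum_subset (Finset.range_subset_range.2 (by omega)) ?_).symm
    intro j _ hj
    rw [Finset.mem_range, not_lt] at hj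
    rw [Nat.choose_eq_zero_of_lt (by omega), zero_mul]
  rw [h2] at h
  rw [h]
  push_cast
  rfl

end CFL
namespace CFL
variable {V : Type} [Fintype V] [DecidableEq V]

lemma ktfree_matched (R : WeightedGraph V) (k r t : ℕ) (wA : ℝ)
    (h : MatchedHalfEdges R k wA r) (ht : 2 * Fintype.card V - k < t)
    (htk : k ≤ Fintype.card V) :
    R.KtFree t := by
  obtain ⟨e₁, e₂, hinj, hhalf, _, _, _⟩ := h
  have he11 : ∀ a b : Fin k, e₁ a = e₁ b → a = b := fun a b h =>
    Sum.inl.inj (hinj (show Sum.elim e₁ e₂ (.inl a) = Sum.elim e₁ e₂ (.inl b) from h))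
  have he22 : ∀ a b : Fin k, e₂ a = e₂ b → a = b := fun a b h =>
    Sum.inr.inj (hinj (show Sum.elim e₁ e₂ (.inr a) = Sum.elim e₁ e₂ (.inr b) from h))
  have he12 : ∀ a b : Fin k, e₁ a ≠ e₂ b := fun a b h =>
    Sum.inl_ne_inr (hinj (show Sum.elim e₁ e₂ (.inl a) = Sum.elim e₁ e₂ (.inr b) from h))
  rintro ⟨S₁, S₂, hsub, hc2, hsum, hcl1, hcl2⟩
  set f : Fin k → V := fun ℓ => if e₁ ℓ ∈ S₂ then e₂ ℓ else e₁ ℓ with hf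
  have hf1 : ∀ ℓ, f ℓ ∉ S₂ := by
    intro ℓ
    rw [hf]
    simp only []
    split_ifs with h1
    · intro h2
      have hne : e₁ ℓ ≠ e₂ ℓ := he12 ℓ ℓ
      have hadj := hcl2 (Finset.mem_coe.2 h1) (Finset.mem_coe.2 h2) hne
      have := hadj.2
      rw [hhalf ℓ] at this
      exact lt_irrefl _ this
    · exact h1
  have hfinj : Function.Injective f := by
    intro a b hab
    rw [hf] at hab
    simp only at hab
    split_ifs at hab with h1 h2 h2
    · exact he22 _ _ hab
    · exact absurd hab.symm (he12 _ _)
    · exact absurd hab (he12 _ _)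
    · exact he11 _ _ hab
  have himg : image f univ ⊆ univ \ S₂ := by
    intro x hx
    obtain ⟨ℓ, _, rfl⟩ := Finset.mem_image.1 hx
    exact Finset.mem_sdiff.2 ⟨mem_univ _, hf1 ℓ⟩
  have hcard : k ≤ Fintype.card V - S₂.card := by
    have h1 := Finset.card_le_card himg
    rw [card_image_of_injective _ hfinj, card_univ, Fintype.card_fin] at h1
    rw [Finset.card_sdiff_of_subset (Finset.subset_univ S₂), card_univ] at h1
    exact h1
  have h1 : S₁.card ≤ Fintype.card V := by
    have := Finset.card_le_card (Finset.subset_univ S₁)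
    rwa [card_univ] at this
  have h2 : S₂.card ≤ Fintype.card V := by
    have := Finset.card_le_card (Finset.subset_univ S₂)
    rwa [card_univ] at this
  omega

noncomputable def injSum (V : Type) [Fintype V] [DecidableEq V] (s : ℕ) (w : V → ℝ) : ℝ :=
  ∑ σ ∈ univ.filter (fun σ : Fin s → V => Function.Injective σ), ∏ i, w (σ i)

lemma density_le_injSum (R : WeightedGraph V) (s : ℕ) :
    R.density s ≤ injSum V s R.vw := by
  rw [density_eq_sum_inj, injSum]
  apply Finset.sum_le_sum
  intro σ _
  have h1 : 0 ≤ ∏ i, R.vw (σ i) := Finset.prod_nonneg (fun i _ => R.vw_nonneg _)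
  have h2 : (∏ p ∈ univ.filter (fun p : Fin s × Fin s => p.1 < p.2),
      R.ew (σ p.1) (σ p.2)) ≤ 1 :=
    Finset.prod_le_one (fun p _ => R.ew_nonneg _ _) (fun p _ => R.ew_le_one _ _)
  exact mul_le_of_le_one_right h1 h2

lemma injSum_uniform (s : ℕ) :
    injSum V s (fun _ => 1/(Fintype.card V : ℝ))
      = ((Fintype.card V).descFactorial s : ℝ) * (1/(Fintype.card V : ℝ))^s := by
  rw [injSum]
  rw [Finset.sum_congr rfl (fun σ _ => Finset.prod_const _)]
  rw [Finset.sum_const, card_filter_inj, nsmul_eq_mul, card_univ, Fintype.card_fin]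

lemma injSum_comp_swap (s : ℕ) (w : V → ℝ) (u v : V) :
    injSum V s (w ∘ Equiv.swap u v) = injSum V s w := by
  rw [injSum, injSum]
  apply Finset.sum_nbij' (fun σ => (Equiv.swap u v) ∘ σ) (fun σ => (Equiv.swap u v) ∘ σ)
  · intro σ hσ
    rw [mem_filter] at hσ ⊢
    exact ⟨mem_univ _, (Equiv.swap u v).injective.comp hσ.2⟩
  · intro σ hσ
    rw [mem_filter] at hσ ⊢
    exact ⟨mem_univ _, (Equiv.swap u v).injective.comp hσ.2⟩
  · intro σ _; funext i; simp
  · intro σ _; funext i; simp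
  · intro σ _; rfl
end CFL
namespace CFL
variable {V : Type} [Fintype V] [DecidableEq V]

lemma injSum_smooth (s : ℕ) (w : V → ℝ) (hw : ∀ x, 0 ≤ w x) (u v : V) (huv : u ≠ v) :
    injSum V s w ≤ injSum V s
      (Function.update (Function.update w u ((w u + w v)/2)) v ((w u + w v)/2)) := by
  set m : ℝ := (w u + w v)/2 with hm
  set w' : V → ℝ := Function.update (Function.update w u m) v m with hw'
  have hw'u : w' u = m := by
    rw [hw', Function.update_of_ne huv, Function.update_self]
  have hw'v : w' v = m := by rw [hw', Function.update_self]
  have hw'o : ∀ x, x ≠ u → x ≠ v → w' x = w x := by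
    intro x hxu hxv
    rw [hw', Function.update_of_ne hxv, Function.update_of_ne hxu]
  have key : ∀ σ ∈ univ.filter (fun σ : Fin s → V => Function.Injective σ),
      (∏ i, w (σ i)) + (∏ i, (w ∘ Equiv.swap u v) (σ i)) ≤ 2 * ∏ i, w' (σ i) := by
    intro σ hσ
    have hσinj : Function.Injective σ := (mem_filter.1 hσ).2
    by_cases hu : ∃ i, σ i = u
    · obtain ⟨i₀, hi₀⟩ := hu
      by_cases hv : ∃ j, σ j = v
      · obtain ⟨j₀, hj₀⟩ := hv
        have hij : i₀ ≠ j₀ := fun h => huv (by rw [← hi₀, h, hj₀])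
        have hj₀' : j₀ ∈ univ.erase i₀ := Finset.mem_erase.2 ⟨Ne.symm hij, mem_univ _⟩
        have hsplit : ∀ g : V → ℝ, (∏ i, g (σ i)) =
            g (σ i₀) * (g (σ j₀) * ∏ i ∈ (univ.erase i₀).erase j₀, g (σ i)) := by
          intro g
          rw [← Finset.mul_prod_erase univ _ (mem_univ i₀),
            ← Finset.mul_prod_erase (univ.erase i₀) _ hj₀']
        have hob : ∀ i ∈ (univ.erase i₀).erase j₀, σ i ≠ u ∧ σ i ≠ v := by
          intro i hi
          rw [Finset.mem_erase, Finset.mem_erase] at hi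
          constructor
          · intro h; exact hi.2.1 (hσinj (h.trans hi₀.symm))
          · intro h; exact hi.1 (hσinj (h.trans hj₀.symm))
        set P : ℝ := ∏ i ∈ (univ.erase i₀).erase j₀, w (σ i) with hP
        have hPnn : 0 ≤ P := Finset.prod_nonneg (fun i _ => hw _)
        have e1 : (∏ i, w (σ i)) = w u * (w v * P) := by
          rw [hsplit w, hi₀, hj₀]
        have e2 : (∏ i, w' (σ i)) = m * (m * P) := by
          rw [hsplit w', hi₀, hj₀, hw'u, hw'v]
          congr 2
          exact Finset.prod_congr rfl (fun i hi => hw'o _ (hob i hi).1 (hob i hi).2)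
        have e3 : (∏ i, (w ∘ Equiv.swap u v) (σ i)) = w v * (w u * P) := by
          rw [hsplit (w ∘ Equiv.swap u v), hi₀, hj₀]
          simp only [Function.comp_apply, Equiv.swap_apply_left, Equiv.swap_apply_right]
          congr 2
          refine Finset.prod_congr rfl (fun i hi => ?_)
          simp only [Function.comp_apply,
            Equiv.swap_apply_of_ne_of_ne (hob i hi).1 (hob i hi).2]
        rw [e1, e2, e3, hm]
        nlinarith [sq_nonneg (w u - w v), hPnn, mul_nonneg (hw u) (hw v)]
      · push_neg at hv
        have hsplit : ∀ g : V → ℝ, (∏ i, g (σ i)) =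
            g (σ i₀) * ∏ i ∈ univ.erase i₀, g (σ i) :=
          fun g => (Finset.mul_prod_erase univ _ (mem_univ i₀)).symm
        have hob : ∀ i ∈ univ.erase i₀, σ i ≠ u ∧ σ i ≠ v := by
          intro i hi
          rw [Finset.mem_erase] at hi
          exact ⟨fun h => hi.1 (hσinj (h.trans hi₀.symm)), hv i⟩
        set P : ℝ := ∏ i ∈ univ.erase i₀, w (σ i) with hP
        have e1 : (∏ i, w (σ i)) = w u * P := by rw [hsplit w, hi₀]
        have e2 : (∏ i, w' (σ i)) = m * P := by
          rw [hsplit w', hi₀, hw'u]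
          congr 1
          exact Finset.prod_congr rfl (fun i hi => hw'o _ (hob i hi).1 (hob i hi).2)
        have e3 : (∏ i, (w ∘ Equiv.swap u v) (σ i)) = w v * P := by
          rw [hsplit (w ∘ Equiv.swap u v), hi₀]
          simp only [Function.comp_apply, Equiv.swap_apply_left]
          congr 1
          refine Finset.prod_congr rfl (fun i hi => ?_)
          simp only [Function.comp_apply,
            Equiv.swap_apply_of_ne_of_ne (hob i hi).1 (hob i hi).2]
        rw [e1, e2, e3, hm]
        ring_nf
        exact le_refl _
    · push_neg at hu
      by_cases hv : ∃ j, σ j = v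
      · obtain ⟨j₀, hj₀⟩ := hv
        have hsplit : ∀ g : V → ℝ, (∏ i, g (σ i)) =
            g (σ j₀) * ∏ i ∈ univ.erase j₀, g (σ i) :=
          fun g => (Finset.mul_prod_erase univ _ (mem_univ j₀)).symm
        have hob : ∀ i ∈ univ.erase j₀, σ i ≠ u ∧ σ i ≠ v := by
          intro i hi
          rw [Finset.mem_erase] at hi
          exact ⟨hu i, fun h => hi.1 (hσinj (h.trans hj₀.symm))⟩
        set P : ℝ := ∏ i ∈ univ.erase j₀, w (σ i) with hP
        have e1 : (∏ i, w (σ i)) = w v * P := by rw [hsplit w, hj₀]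
        have e2 : (∏ i, w' (σ i)) = m * P := by
          rw [hsplit w', hj₀, hw'v]
          congr 1
          exact Finset.prod_congr rfl (fun i hi => hw'o _ (hob i hi).1 (hob i hi).2)
        have e3 : (∏ i, (w ∘ Equiv.swap u v) (σ i)) = w u * P := by
          rw [hsplit (w ∘ Equiv.swap u v), hj₀]
          simp only [Function.comp_apply, Equiv.swap_apply_right]
          congr 1
          refine Finset.prod_congr rfl (fun i hi => ?_)
          simp only [Function.comp_apply,
            Equiv.swap_apply_of_ne_of_ne (hob i hi).1 (hob i hi).2]
        rw [e1, e2, e3, hm]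
        ring_nf
        exact le_refl _
      · push_neg at hv
        have hob : ∀ i, σ i ≠ u ∧ σ i ≠ v := fun i => ⟨hu i, hv i⟩
        have e2 : (∏ i, w' (σ i)) = ∏ i, w (σ i) :=
          Finset.prod_congr rfl (fun i _ => hw'o _ (hob i).1 (hob i).2)
        have e3 : (∏ i, (w ∘ Equiv.swap u v) (σ i)) = ∏ i, w (σ i) := by
          refine Finset.prod_congr rfl (fun i _ => ?_)
          simp only [Function.comp_apply,
            Equiv.swap_apply_of_ne_of_ne (hob i).1 (hob i).2]
        rw [e2, e3]
        ring_nf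
        exact le_refl _
  have hsum := Finset.sum_le_sum key
  rw [Finset.sum_add_distrib] at hsum
  have h1 : injSum V s w + injSum V s (w ∘ Equiv.swap u v)
      ≤ ∑ σ ∈ univ.filter (fun σ : Fin s → V => Function.Injective σ), 2 * ∏ i, w' (σ i) :=
    hsum
  rw [injSum_comp_swap] at h1
  rw [← Finset.mul_sum] at h1
  have : injSum V s w + injSum V s w ≤ 2 * injSum V s w' := h1
  linarith

lemma injSum_le_uniform [Nonempty V] (s : ℕ) (w : V → ℝ) (hw : w ∈ stdSimplex ℝ V) :
    injSum V s w ≤ injSum V s (fun _ => 1/(Fintype.card V : ℝ)) := by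
  have hcard : (0:ℝ) < (Fintype.card V : ℝ) := by
    exact_mod_cast Fintype.card_pos
  have huni : (fun _ => 1/(Fintype.card V : ℝ)) ∈ stdSimplex ℝ V := by
    constructor
    · intro x; positivity
    · rw [Finset.sum_const, card_univ, nsmul_eq_mul]
      field_simp
  have hF : Continuous (injSum V s) := by
    unfold injSum
    exact continuous_finset_sum _ (fun σ _ =>
      continuous_finset_prod _ (fun i _ => continuous_apply (σ i)))
  obtain ⟨x, hxK, hxmax⟩ := (isCompact_stdSimplex ℝ V).exists_isMaxOn ⟨_, huni⟩ hF.continuousOn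
  set K2 : Set (V → ℝ) := stdSimplex ℝ V ∩ injSum V s ⁻¹' {injSum V s x} with hK2
  have hK2c : IsCompact K2 :=
    (isCompact_stdSimplex ℝ V).inter_right (isClosed_singleton.preimage hF)
  have hK2ne : K2.Nonempty := ⟨x, hxK, rfl⟩
  have hg : Continuous (fun w : V → ℝ => ∑ y, (w y)^2) :=
    continuous_finset_sum _ (fun y _ => (continuous_apply y).pow 2)
  obtain ⟨z, hzK2, hzmin⟩ := hK2c.exists_isMinOn hK2ne hg.continuousOn
  have hzmax : injSum V s z = injSum V s x := hzK2.2
  have hzsimp : z ∈ stdSimplex ℝ V := hzK2.1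
  have hconst : ∀ u v : V, z u = z v := by
    by_contra hcon
    push_neg at hcon
    obtain ⟨u, v, huv⟩ := hcon
    have hne : u ≠ v := fun h => huv (by rw [h])
    set m : ℝ := (z u + z v)/2 with hm
    set z' : V → ℝ := Function.update (Function.update z u m) v m with hz'
    have hz'u : z' u = m := by
      rw [hz', Function.update_of_ne hne, Function.update_self]
    have hz'v : z' v = m := by rw [hz', Function.update_self]
    have hz'o : ∀ x, x ≠ u → x ≠ v → z' x = z x := by
      intro x hxu hxv
      rw [hz', Function.update_of_ne hxv, Function.update_of_ne hxu]
    have hsplit : ∀ g : V → ℝ, (∑ y, g y) = g u + (g v + ∑ y ∈ (univ.erase u).erase v, g y) := by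
      intro g
      rw [← Finset.add_sum_erase univ g (mem_univ u),
        ← Finset.add_sum_erase (univ.erase u) g
          (Finset.mem_erase.2 ⟨Ne.symm hne, mem_univ _⟩)]
    have hrest : ∀ y ∈ (univ.erase u).erase v, y ≠ u ∧ y ≠ v := by
      intro y hy
      rw [Finset.mem_erase, Finset.mem_erase] at hy
      exact ⟨hy.2.1, hy.1⟩
    have hz'simp : z' ∈ stdSimplex ℝ V := by
      constructor
      · intro y
        by_cases h1 : y = u
        · rw [h1, hz'u, hm]; have := hzsimp.1 u; have := hzsimp.1 v; linarith
        by_cases h2 : y = v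
        · rw [h2, hz'v, hm]; have := hzsimp.1 u; have := hzsimp.1 v; linarith
        · rw [hz'o y h1 h2]; exact hzsimp.1 y
      · rw [hsplit z', hz'u, hz'v,
          Finset.sum_congr rfl (fun y hy => hz'o y (hrest y hy).1 (hrest y hy).2)]
        have h2 := hzsimp.2
        rw [hsplit z] at h2
        rw [hm]
        linarith
    have hz'max : injSum V s z' = injSum V s x := by
      apply le_antisymm (hxmax hz'simp)
      rw [← hzmax]
      exact injSum_smooth s z hzsimp.1 u v hne
    have hlt : (∑ y, (z' y)^2) < ∑ y, (z y)^2 := by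
      rw [hsplit (fun y => (z' y)^2), hsplit (fun y => (z y)^2)]
      rw [hz'u, hz'v,
        Finset.sum_congr rfl (fun y hy => by rw [hz'o y (hrest y hy).1 (hrest y hy).2])]
      have : 2 * m^2 < (z u)^2 + (z v)^2 := by
        have h0 : (z u - z v) ≠ 0 := sub_ne_zero.2 huv
        have h1 : 0 < (z u - z v)^2 := by positivity
        rw [hm]; nlinarith [h1]
      linarith
    exact absurd (hzmin ⟨hz'simp, hz'max⟩) (not_le.2 hlt)
  have hzuni : z = (fun _ => 1/(Fintype.card V : ℝ)) := by
    obtain ⟨v₀⟩ := ‹Nonempty V›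
    have hsum := hzsimp.2
    rw [Finset.sum_congr rfl (fun y _ => hconst y v₀), Finset.sum_const, card_univ,
      nsmul_eq_mul] at hsum
    funext y
    rw [hconst y v₀]
    field_simp at hsum ⊢
    linarith
  calc injSum V s w ≤ injSum V s x := hxmax hw
    _ = injSum V s z := hzmax.symm
    _ = _ := by rw [hzuni]

end CFL
namespace CFL

lemma odd_core (r s : ℕ) (hs : 1000 ≤ s) (hsr : s ≤ r) (hub : (2*(r:ℝ)+1) ≤ 2.08 * s) :
    (r.choose s : ℝ) < ((r-3).choose s : ℝ) + 3*((r-3).choose (s-1) : ℝ)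
      + (45/16)*((r-3).choose (s-2) : ℝ) + (27/32)*((r-3).choose (s-3) : ℝ)
      + (81/1024)*((r-3).choose (s-4) : ℝ) := by
  rw [choose_expand 3 r s (by omega) (by omega)]
  rw [Finset.sum_range_succ, Finset.sum_range_succ, Finset.sum_range_succ,
    Finset.sum_range_succ, Finset.sum_range_zero]
  norm_num
  have hsR : (1000:ℝ) ≤ (s:ℝ) := by exact_mod_cast hs
  have hsrR : (s:ℝ) ≤ (r:ℝ) := by exact_mod_cast hsr
  set N2 : ℝ := ((r-3).choose (s-2) : ℝ) with hN2
  set N3 : ℝ := ((r-3).choose (s-3) : ℝ) with hN3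
  set N4 : ℝ := ((r-3).choose (s-4) : ℝ) with hN4
  have hN4ge : (1:ℝ) ≤ N4 := by
    rw [hN4]; exact_mod_cast Nat.one_le_iff_ne_zero.2 (Nat.choose_pos (by omega)).ne'
  have hN3nn : (0:ℝ) ≤ N3 := by rw [hN3]; positivity
  have hN2nn : (0:ℝ) ≤ N2 := by rw [hN2]; positivity
  have hN4nn : (0:ℝ) ≤ N4 := by linarith
  have c3 : N3 * ((s:ℝ)-3) = N4 * ((r:ℝ)+1-(s:ℝ)) := by
    have h := Nat.choose_succ_right_eq (r-3) (s-4)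
    rw [show s-4+1 = s-3 from by omega, show (r-3) - (s-4) = r+1-s from by omega] at h
    have h2 := congrArg (fun n : ℕ => (n:ℝ)) h
    push_cast at h2
    rw [Nat.cast_sub (by omega : 3 ≤ s), Nat.cast_sub (by omega : s ≤ r+1)] at h2
    push_cast at h2
    rw [hN3, hN4]
    linarith [h2]
  have c2 : N2 * ((s:ℝ)-2) = N3 * ((r:ℝ)-(s:ℝ)) := by
    have h := Nat.choose_succ_right_eq (r-3) (s-3)
    rw [show s-3+1 = s-2 from by omega, show (r-3) - (s-3) = r-s from by omega] at h
    have h2 := congrArg (fun n : ℕ => (n:ℝ)) h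
    push_cast at h2
    rw [Nat.cast_sub (by omega : 2 ≤ s), Nat.cast_sub (by omega : s ≤ r)] at h2
    push_cast at h2
    rw [hN2, hN3]
    linarith [h2]
  have hq : (r:ℝ)+1-(s:ℝ) ≤ 0.041*((s:ℝ)-3) := by nlinarith
  have hKnn : (0:ℝ) ≤ (r:ℝ)+1-(s:ℝ) := by linarith
  have h3 : N3 ≤ 0.041 * N4 := by
    have hstep : N3 * ((s:ℝ)-3) ≤ (0.041 * N4) * ((s:ℝ)-3) := by
      rw [c3]; nlinarith
    exact le_of_mul_le_mul_right hstep (by linarith)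
  have h2 : N2 ≤ 0.041 * N3 := by
    have hstep : N2 * ((s:ℝ)-2) ≤ (0.041 * N3) * ((s:ℝ)-2) := by
      have : N3 * ((r:ℝ)-(s:ℝ)) ≤ N3 * ((r:ℝ)+1-(s:ℝ)) := by nlinarith
      have h4 : N3 * ((r:ℝ)+1-(s:ℝ)) ≤ N3 * (0.041*((s:ℝ)-3)) := by nlinarith
      rw [c2]; nlinarith
    exact le_of_mul_le_mul_right hstep (by linarith)
  linarith

lemma even_core (r s : ℕ) (hs : 1000 ≤ s) (hsr : s ≤ r) (hub : (2*(r:ℝ)) ≤ 2.08 * s) :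
    (r.choose s : ℝ) < ((r-5).choose s : ℝ) + 5*((r-5).choose (s-1) : ℝ)
      + (75/8)*((r-5).choose (s-2) : ℝ) + (875/108)*((r-5).choose (s-3) : ℝ)
      + (5625/1728)*((r-5).choose (s-4) : ℝ) + (3125/5184)*((r-5).choose (s-5) : ℝ)
      + (15625/373248)*((r-5).choose (s-6) : ℝ) := by
  rw [choose_expand 5 r s (by omega) (by omega)]
  rw [Finset.sum_range_succ, Finset.sum_range_succ, Finset.sum_range_succ,
    Finset.sum_range_succ, Finset.sum_range_succ, Finset.sum_range_succ,
    Finset.sum_range_zero]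
  norm_num
  have hsR : (1000:ℝ) ≤ (s:ℝ) := by exact_mod_cast hs
  have hsrR : (s:ℝ) ≤ (r:ℝ) := by exact_mod_cast hsr
  set N2 : ℝ := ((r-5).choose (s-2) : ℝ) with hN2
  set N3 : ℝ := ((r-5).choose (s-3) : ℝ) with hN3
  set N4 : ℝ := ((r-5).choose (s-4) : ℝ) with hN4
  set N5 : ℝ := ((r-5).choose (s-5) : ℝ) with hN5
  set N6 : ℝ := ((r-5).choose (s-6) : ℝ) with hN6
  have hN6ge : (1:ℝ) ≤ N6 := by
    rw [hN6]; exact_mod_cast Nat.one_le_iff_ne_zero.2 (Nat.choose_pos (by omega)).ne'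
  have hN2nn : (0:ℝ) ≤ N2 := by rw [hN2]; positivity
  have hN3nn : (0:ℝ) ≤ N3 := by rw [hN3]; positivity
  have hN4nn : (0:ℝ) ≤ N4 := by rw [hN4]; positivity
  have hN5nn : (0:ℝ) ≤ N5 := by rw [hN5]; positivity
  have hN6nn : (0:ℝ) ≤ N6 := by linarith
  have hq : (r:ℝ)+1-(s:ℝ) ≤ 0.042*((s:ℝ)-5) := by nlinarith
  have hKnn : (0:ℝ) ≤ (r:ℝ)+1-(s:ℝ) := by linarith
  -- exact and bounded relations
  have c5 : N5 * ((s:ℝ)-5) = N6 * ((r:ℝ)+1-(s:ℝ)) := by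
    have h := Nat.choose_succ_right_eq (r-5) (s-6)
    rw [show s-6+1 = s-5 from by omega, show (r-5) - (s-6) = r+1-s from by omega] at h
    have h2 := congrArg (fun n : ℕ => (n:ℝ)) h
    push_cast at h2
    rw [Nat.cast_sub (by omega : 5 ≤ s), Nat.cast_sub (by omega : s ≤ r+1)] at h2
    push_cast at h2
    rw [hN5, hN6]
    linarith [h2]
  have cb : ∀ a : ℕ, 2 ≤ a → a ≤ 4 →
      ((r-5).choose (s-a) : ℝ) * ((s:ℝ)-(a:ℝ)) ≤ ((r-5).choose (s-(a+1)) : ℝ) * ((r:ℝ)+1-(s:ℝ)) := by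
    intro a ha ha5
    have h := Nat.choose_succ_right_eq (r-5) (s-(a+1))
    rw [show s-(a+1)+1 = s-a from by omega] at h
    have h2 := congrArg (fun n : ℕ => (n:ℝ)) h
    push_cast at h2
    rw [Nat.cast_sub (by omega : a ≤ s)] at h2
    push_cast at h2
    have hle : (((r-5) - (s-(a+1)) : ℕ) : ℝ) ≤ (r:ℝ)+1-(s:ℝ) := by
      have hn : ((r-5) - (s-(a+1)) : ℕ) ≤ r+1-s := by omega
      calc (((r-5) - (s-(a+1)) : ℕ) : ℝ) ≤ ((r+1-s : ℕ) : ℝ) := by exact_mod_cast hn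
        _ = (r:ℝ)+1-(s:ℝ) := by
            rw [Nat.cast_sub (by omega : s ≤ r+1)]; push_cast; ring
    have hpos : (0:ℝ) ≤ ((r-5).choose (s-(a+1)) : ℝ) := by positivity
    rw [h2]
    exact mul_le_mul_of_nonneg_left hle hpos
  have hstep : ∀ N N' : ℝ, ∀ A : ℝ, 0 ≤ N' → A ≤ 5 → 2 ≤ A →
      N * (((s:ℝ)+5)-(A+5)) ≤ N' * ((r:ℝ)+1-(s:ℝ)) → N ≤ 0.042 * N' := by
    intro N N' A hN' hA5 hA2 hb
    have hq' : (r:ℝ)+1-(s:ℝ) ≤ 0.042*(((s:ℝ)+5)-(A+5)) := by linarith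
    have t1 : N' * ((r:ℝ)+1-(s:ℝ)) ≤ N' * (0.042*(((s:ℝ)+5)-(A+5))) :=
      mul_le_mul_of_nonneg_left hq' hN'
    have t2 : N * (((s:ℝ)+5)-(A+5)) ≤ (0.042*N') * (((s:ℝ)+5)-(A+5)) := by
      calc N * (((s:ℝ)+5)-(A+5)) ≤ N' * ((r:ℝ)+1-(s:ℝ)) := hb
        _ ≤ N' * (0.042*(((s:ℝ)+5)-(A+5))) := t1
        _ = (0.042*N') * (((s:ℝ)+5)-(A+5)) := by ring
    exact le_of_mul_le_mul_right t2 (by linarith)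
  have h5 : N5 ≤ 0.042 * N6 := by
    refine hstep N5 N6 5 hN6nn (by norm_num) (by norm_num) ?_
    rw [show ((s:ℝ)+5)-((5:ℝ)+5) = (s:ℝ)-5 from by ring]
    exact le_of_eq c5
  have h4 : N4 ≤ 0.042 * N5 := by
    refine hstep N4 N5 4 hN5nn (by norm_num) (by norm_num) ?_
    rw [show ((s:ℝ)+5)-((4:ℝ)+5) = (s:ℝ)-4 from by ring]
    have hb := cb 4 (by omega) (by omega)
    rw [show s-(4+1) = s-5 from by omega] at hb
    rw [hN4, hN5]
    convert hb using 3
    norm_num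
  have h3 : N3 ≤ 0.042 * N4 := by
    refine hstep N3 N4 3 hN4nn (by norm_num) (by norm_num) ?_
    rw [show ((s:ℝ)+5)-((3:ℝ)+5) = (s:ℝ)-3 from by ring]
    have hb := cb 3 (by omega) (by omega)
    rw [show s-(3+1) = s-4 from by omega] at hb
    rw [hN3, hN4]
    convert hb using 3
    norm_num
  have hh2 : N2 ≤ 0.042 * N3 := by
    refine hstep N2 N3 2 hN3nn (by norm_num) (by norm_num) ?_
    rw [show ((s:ℝ)+5)-((2:ℝ)+5) = (s:ℝ)-2 from by ring]
    have hb := cb 2 (by omega) (by omega)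
    rw [show s-(2+1) = s-3 from by omega] at hb
    rw [hN2, hN3]
    convert hb using 3
    norm_num
  rw [show Nat.choose 5 2 = 10 from by norm_num [Nat.choose],
    show Nat.choose 5 3 = 10 from by norm_num [Nat.choose]]
  push_cast
  linarith

end CFL

theorem conjecture_false_for_large_s :
    ∃ s₀ : ℕ, ∀ s : ℕ, s₀ ≤ s → ∀ t : ℕ, 2 * s ≤ t → (t : ℝ) ≤ 2.08 * (s : ℝ) →
      (∀ r : ℕ, t = 2 * r + 1 → ∀ hr : 0 < r,
        ∀ R' : WeightedGraph (Fin (r + 1)),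
          MatchedHalfEdges R' 2 (3 / (4 * (r : ℝ))) r →
          R'.KtFree t ∧ (completeBalanced r hr).density s < R'.density s) ∧
      (∀ r : ℕ, t = 2 * r →
        ∀ R₂ : WeightedGraph (Fin (r + 1)),
          MatchedHalfEdges R₂ 3 (5 / (6 * (r : ℝ))) r →
          R₂.KtFree t ∧
          ∀ (W : Type) (_ : Fintype W) (R₁ : WeightedGraph W),
            Fintype.card W = r → OneHalfEdge R₁ →
              R₁.density s < R₂.density s) := by
  refine ⟨1000, fun s hs t ht1 ht2 => ⟨?_, ?_⟩⟩
  · rintro r rfl hr R' hR'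
    have hsr : s ≤ r := by omega
    have hub : (2*(r:ℝ)+1) ≤ 2.08*(s:ℝ) := by
      push_cast at ht2
      linarith
    constructor
    · refine CFL.ktfree_matched R' 2 r (2*r+1) _ hR' ?_ ?_ <;>
        rw [Fintype.card_fin] <;> omega
    · rw [CFL.density_completeBalanced r s hr, CFL.density_R2k r s (by omega) hsr R' hR',
        Nat.descFactorial_eq_factorial_mul_choose]
      push_cast
      have hrpos : (0:ℝ) < (r:ℝ) := by exact_mod_cast hr
      have hpos : (0:ℝ) < (s.factorial : ℝ) * (1/(r:ℝ))^s := by positivity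
      calc (s.factorial:ℝ) * (r.choose s : ℝ) * (1/(r:ℝ))^s
          = (s.factorial:ℝ) * (1/(r:ℝ))^s * (r.choose s : ℝ) := by ring
        _ < _ := mul_lt_mul_of_pos_left (CFL.odd_core r s hs hsr hub) hpos
  · rintro r rfl R₂ hR₂
    have hsr : s ≤ r := by omega
    have hr : 0 < r := by omega
    have hub : (2*(r:ℝ)) ≤ 2.08*(s:ℝ) := by
      push_cast at ht2
      linarith
    have hrpos : (0:ℝ) < (r:ℝ) := by exact_mod_cast hr
    constructor
    · refine CFL.ktfree_matched R₂ 3 r (2*r) _ hR₂ ?_ ?_ <;>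
        rw [Fintype.card_fin] <;> omega
    · intro W _ R₁ hcard _
      letI : DecidableEq W := Classical.decEq W
      haveI : Nonempty W := by
        rw [← Fintype.card_pos_iff, hcard]
        omega
      have h1 : R₁.density s ≤ ((r.descFactorial s : ℕ):ℝ) * (1/(r:ℝ))^s := by
        calc R₁.density s ≤ CFL.injSum W s R₁.vw := CFL.density_le_injSum R₁ s
          _ ≤ CFL.injSum W s (fun _ => 1/(Fintype.card W : ℝ)) :=
              CFL.injSum_le_uniform s R₁.vw ⟨R₁.vw_nonneg, R₁.vw_sum⟩
          _ = ((Fintype.card W).descFactorial s : ℝ) * (1/(Fintype.card W:ℝ))^s :=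
              CFL.injSum_uniform s
          _ = _ := by rw [hcard]
      have h2 : ((r.descFactorial s : ℕ):ℝ) * (1/(r:ℝ))^s < R₂.density s := by
        rw [CFL.density_R3k r s (by omega) hsr R₂ hR₂,
          Nat.descFactorial_eq_factorial_mul_choose]
        push_cast
        have hpos : (0:ℝ) < (s.factorial : ℝ) * (1/(r:ℝ))^s := by positivity
        calc (s.factorial:ℝ) * (r.choose s : ℝ) * (1/(r:ℝ))^s
            = (s.factorial:ℝ) * (1/(r:ℝ))^s * (r.choose s : ℝ) := by ring
          _ < _ := mul_lt_mul_of_pos_left (CFL.even_core r s hs hsr hub) hpos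
      linarith
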